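/- With t defined as t(K)_n = 3·b(K)_n·c(K)_n where c : 𝒦(ℤ^ω) → {-1,1}^ω is injective and b(K)_n = max{|x_n| : x ∈ K}+1, the map T : H → ℤ^ω, T(K,x) = x + t(K), is injective on H = {(K,x) : x ∈ K}. -/

import Mathlib

open TopologicalSpace

/-- `b(K)_n = max { |x_n| : x ∈ K } + 1`, as an integer. -/
noncomputable def bInt (K : NonemptyCompacts (ℕ → ℤ)) : ℕ → ℤ :=
  fun n => ((sSup {m : ℕ | ∃ x ∈ K, (x n).natAbs = m} : ℕ) : ℤ) + 1

lemma natAbs_le_sSup (K : NonemptyCompacts (ℕ → ℤ)) (n : ℕ) {x : ℕ → ℤ} (hx : x ∈ K) :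
    (x n).natAbs ≤ sSup {m : ℕ | ∃ y ∈ K, (y n).natAbs = m} := by
  apply le_csSup
  · have hset : {m : ℕ | ∃ y ∈ K, (y n).natAbs = m}
        = (fun y : ℕ → ℤ => (y n).natAbs) '' (K : Set (ℕ → ℤ)) := by
      ext m; simp [Set.mem_image]
    rw [hset]
    have hcont : Continuous (fun y : ℕ → ℤ => (y n).natAbs) :=
      (continuous_of_discreteTopology (α := ℤ) (β := ℕ) (f := Int.natAbs)).comp (continuous_apply n)
    exact (K.isCompact.image hcont).bddAbove
  · exact ⟨x, hx, rfl⟩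

theorem T_injective (c : NonemptyCompacts (ℕ → ℤ) → ℕ → ℤ)
    (hc_val : ∀ K n, c K n = 1 ∨ c K n = -1) (hc_inj : Function.Injective c) :
    Function.Injective
      (fun p : {q : NonemptyCompacts (ℕ → ℤ) × (ℕ → ℤ) // q.2 ∈ q.1} =>
        fun n => p.val.2 n + 3 * bInt p.val.1 n * c p.val.1 n) := by
  rintro ⟨⟨K, x⟩, hx⟩ ⟨⟨L, y⟩, hy⟩ h
  simp only at h
  have hn : ∀ n, x n + 3 * bInt K n * c K n = y n + 3 * bInt L n * c L n :=
    fun n => congrFun h n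
  have hbK : ∀ n, ((x n).natAbs : ℤ) + 1 ≤ bInt K n := by
    intro n
    have h := natAbs_le_sSup K n hx
    show ((x n).natAbs : ℤ) + 1 ≤ ((sSup {m : ℕ | ∃ y ∈ K, (y n).natAbs = m} : ℕ) : ℤ) + 1
    exact add_le_add (by exact_mod_cast h) (le_refl 1)
  have hbL : ∀ n, ((y n).natAbs : ℤ) + 1 ≤ bInt L n := by
    intro n
    have h := natAbs_le_sSup L n hy
    show ((y n).natAbs : ℤ) + 1 ≤ ((sSup {m : ℕ | ∃ z ∈ L, (z n).natAbs = m} : ℕ) : ℤ) + 1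
    exact add_le_add (by exact_mod_cast h) (le_refl 1)
  have hcKL : c K = c L := by
    funext n
    have h1 := hbK n
    have h2 := hbL n
    have h3 := hn n
    rcases hc_val K n with hK1 | hK1 <;> rcases hc_val L n with hL1 | hL1 <;>
      rw [hK1, hL1] at h3 ⊢ <;> omega
  have hKL : K = L := hc_inj hcKL
  subst hKL
  have hxy : x = y := by
    funext n
    have h3 := hn n
    omega
  subst hxy
  rfl
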